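/- Let F be a holomorphic map from the punctured unit disc Δ* to SL(2,ℂ) with a pole of order n ≥ 1 at 0. Then there exist a matrix A ∈ SL(2,ℂ), a matrix B ∈ SU(2), and holomorphic functions a,b,c,d : Δ → ℂ such that for all z ∈ Δ*, A·F(z)·B = z^(−n)·(a(z), b(z); c(z), d(z)), and moreover a(0) = a'(0) = b(0) = c(0) = 0 and d(0) ≠ 0. -/

import Mathlib

/-!
STATEMENT 0: Normal form at a pole of a holomorphic map `F : Δ* → SL(2,ℂ)`
with a pole of order `n ≥ 1` at `0`.
-/

attribute [local instance] Matrix.normedAddCommGroup Matrix.normedSpace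

open Metric Matrix

/-- The open unit disc in `ℂ`. -/
noncomputable def Disc : Set ℂ := Metric.ball (0 : ℂ) 1

/-- The punctured open unit disc in `ℂ`. -/
noncomputable def PDisc : Set ℂ := Metric.ball (0 : ℂ) 1 \ {0}

/-- The linear map `M ↦ (A * M * B) i j`. -/
noncomputable def sandwichEntry (A B : Matrix (Fin 2) (Fin 2) ℂ) (i j : Fin 2) :
    Matrix (Fin 2) (Fin 2) ℂ →ₗ[ℂ] ℂ where
  toFun M := (A * M * B) i j
  map_add' M N := by simp [Matrix.mul_add, Matrix.add_mul]
  map_smul' c M := by simp [Matrix.mul_smul, Matrix.smul_mul]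

lemma diffOn_sandwich (A B : Matrix (Fin 2) (Fin 2) ℂ) (G : ℂ → Matrix (Fin 2) (Fin 2) ℂ)
    (s : Set ℂ) (hG : DifferentiableOn ℂ G s) (i j : Fin 2) :
    DifferentiableOn ℂ (fun z => (A * G z * B) i j) s :=
  ((sandwichEntry A B i j).toContinuousLinearMap).differentiable.comp_differentiableOn hG

lemma star_fin_two (x y : ℂ) :
    star !![x, -(starRingEnd ℂ) y; y, (starRingEnd ℂ) x]
      = !![(starRingEnd ℂ) x, (starRingEnd ℂ) y; -y, x] := by
  ext i j
  fin_cases i <;> fin_cases j <;> simp [Matrix.conjTranspose_apply]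

lemma mkUnitary (x y : ℂ) (h : (starRingEnd ℂ) x * x + (starRingEnd ℂ) y * y = 1) :
    (!![x, -(starRingEnd ℂ) y; y, (starRingEnd ℂ) x]).det = 1 ∧
    !![x, -(starRingEnd ℂ) y; y, (starRingEnd ℂ) x] ∈ Matrix.unitaryGroup (Fin 2) ℂ := by
  constructor
  · rw [Matrix.det_fin_two_of]; ring_nf; linear_combination h
  · rw [Matrix.mem_unitaryGroup_iff, star_fin_two, Matrix.mul_fin_two]
    ext i j
    fin_cases i <;> fin_cases j <;>
      simp [Matrix.one_apply] <;> ring_nf <;> linear_combination h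

lemma reduce_col (M : Matrix (Fin 2) (Fin 2) ℂ) (h0 : M 0 0 = 0) (h1 : M 1 0 = 0)
    (h : M ≠ 0) : ∃ A : Matrix (Fin 2) (Fin 2) ℂ, A.det = 1 ∧ A * M = !![0,0;0,1] := by
  have hM : M = !![0, M 0 1; 0, M 1 1] := by
    conv_lhs => rw [Matrix.eta_fin_two M]
    rw [h0, h1]
  by_cases hc1 : M 0 1 = 0
  · have hc2 : M 1 1 ≠ 0 := by
      intro hc2
      apply h
      rw [hM, hc1, hc2]
      ext i j; fin_cases i <;> fin_cases j <;> simp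
    refine ⟨!![M 1 1, -(M 0 1); 0, (M 1 1)⁻¹], ?_, ?_⟩
    · rw [Matrix.det_fin_two_of]; field_simp; ring
    · conv_lhs => rw [hM, Matrix.mul_fin_two]
      ext i j
      fin_cases i <;> fin_cases j <;> simp [hc1, hc2]
  · refine ⟨!![M 1 1, -(M 0 1); (M 0 1)⁻¹, 0], ?_, ?_⟩
    · rw [Matrix.det_fin_two_of]; field_simp; ring
    · conv_lhs => rw [hM, Matrix.mul_fin_two]
      ext i j
      fin_cases i <;> fin_cases j <;> simp [hc1] <;> ring

theorem normal_form_at_pole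
    (n : ℕ) (hn : 1 ≤ n)
    (F : ℂ → Matrix (Fin 2) (Fin 2) ℂ)
    (hF_holo : DifferentiableOn ℂ F PDisc)
    (hF_SL : ∀ z ∈ PDisc, (F z).det = 1)
    -- `F` has a pole of order `n` at `0`: `z ↦ zⁿ • F z` extends holomorphically
    -- to the disc with nonzero value at `0`.
    (hpole : ∃ G : ℂ → Matrix (Fin 2) (Fin 2) ℂ, DifferentiableOn ℂ G Disc ∧
      (∀ z ∈ PDisc, G z = (z ^ n) • F z) ∧ G 0 ≠ 0) :
    ∃ (A B : Matrix (Fin 2) (Fin 2) ℂ), A.det = 1 ∧ B.det = 1 ∧ B ∈ Matrix.unitaryGroup (Fin 2) ℂ ∧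
      ∃ a b c d : ℂ → ℂ,
        DifferentiableOn ℂ a Disc ∧ DifferentiableOn ℂ b Disc ∧
        DifferentiableOn ℂ c Disc ∧ DifferentiableOn ℂ d Disc ∧
        (∀ z ∈ PDisc, A * F z * B = (z ^ n)⁻¹ • !![a z, b z; c z, d z]) ∧
        a 0 = 0 ∧ deriv a 0 = 0 ∧ b 0 = 0 ∧ c 0 = 0 ∧ d 0 ≠ 0 := by
  obtain ⟨G, hG_holo, hG_eq, hG0⟩ := hpole
  have hDisc_open : IsOpen Disc := isOpen_ball
  have h0Disc : (0:ℂ) ∈ Disc := by simp [Disc]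
  have hPD_sub : PDisc ⊆ Disc := Set.diff_subset
  have hPD_ne : PDisc ⊆ {(0:ℂ)}ᶜ := fun z hz => hz.2
  have hGentry : ∀ i j, DifferentiableOn ℂ (fun z => G z i j) Disc := by
    intro i j
    have := diffOn_sandwich 1 1 G Disc hG_holo i j
    simpa using this
  have hne : (nhdsWithin (0:ℂ) PDisc).NeBot := by
    have hPD : PDisc = Metric.ball (0:ℂ) 1 ∩ {(0:ℂ)}ᶜ := Set.diff_eq _ _
    have h2 : nhdsWithin (0:ℂ) PDisc = nhdsWithin (0:ℂ) {(0:ℂ)}ᶜ := by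
      rw [hPD]
      exact nhdsWithin_inter_of_mem
        (mem_nhdsWithin_of_mem_nhds (Metric.ball_mem_nhds _ one_pos))
    rw [h2]
    exact Filter.NeBot.mono (by exact inferInstance) le_rfl
  have hdetGeq : ∀ z ∈ PDisc, (G z).det = z ^ (2*n) := by
    intro z hz
    rw [hG_eq z hz, Matrix.det_smul, hF_SL z hz, mul_one, Fintype.card_fin, ← pow_mul,
      mul_comm n 2]
  have hdetcont : ContinuousWithinAt (fun z => (G z).det) Disc 0 := by
    have hrw : (fun z => (G z).det)
        = fun z => G z 0 0 * G z 1 1 - G z 0 1 * G z 1 0 :=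
      funext fun z => Matrix.det_fin_two _
    rw [hrw]
    exact (((hGentry 0 0).continuousOn.mul (hGentry 1 1).continuousOn).sub
      ((hGentry 0 1).continuousOn.mul (hGentry 1 0).continuousOn)) 0 h0Disc
  have hdet0 : (G 0).det = 0 := by
    haveI := hne
    have t1 : Filter.Tendsto (fun z => (G z).det) (nhdsWithin 0 PDisc) (nhds ((G 0).det)) :=
      hdetcont.mono hPD_sub
    have t2 : Filter.Tendsto (fun z => (G z).det) (nhdsWithin 0 PDisc) (nhds 0) := by
      apply Filter.Tendsto.congr' (f₁ := fun z : ℂ => z ^ (2*n))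
      · exact (eventually_nhdsWithin_of_forall (fun z hz => (hdetGeq z hz).symm))
      · have h3 : Filter.Tendsto (fun z : ℂ => z ^ (2*n)) (nhds 0) (nhds ((0:ℂ)^(2*n))) :=
          (continuous_pow _).tendsto 0
        rw [zero_pow (by omega)] at h3
        exact h3.mono_left nhdsWithin_le_nhds
    exact tendsto_nhds_unique t1 t2
  -- construct kernel vector of `G 0`
  obtain ⟨u, v, huv, hk1, hk2⟩ : ∃ u v : ℂ, ¬(u = 0 ∧ v = 0) ∧
      G 0 0 0 * u + G 0 0 1 * v = 0 ∧ G 0 1 0 * u + G 0 1 1 * v = 0 := by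
    have hd : G 0 0 0 * G 0 1 1 - G 0 0 1 * G 0 1 0 = 0 := by
      rw [← Matrix.det_fin_two]; exact hdet0
    by_cases hsr : G 0 1 1 = 0 ∧ G 0 1 0 = 0
    · refine ⟨G 0 0 1, -(G 0 0 0), ?_, by ring, by rw [hsr.1, hsr.2]; ring⟩
      rintro ⟨h1, h2⟩
      apply hG0
      ext i j
      fin_cases i <;> fin_cases j <;>
        simp [h1, neg_eq_zero.mp h2, hsr.1, hsr.2]
    · refine ⟨G 0 1 1, -(G 0 1 0), ?_, by linear_combination hd, by ring⟩
      rintro ⟨h1, h2⟩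
      exact hsr ⟨h1, neg_eq_zero.mp h2⟩
  -- normalize it
  obtain ⟨x, y, hxy, hcol0, hcol1⟩ : ∃ x y : ℂ,
      ((starRingEnd ℂ) x * x + (starRingEnd ℂ) y * y = 1) ∧
      (G 0 0 0 * x + G 0 0 1 * y = 0) ∧ (G 0 1 0 * x + G 0 1 1 * y = 0) := by
    set N : ℝ := Complex.normSq u + Complex.normSq v with hNdef
    have hN : 0 < N := by
      rcases not_and_or.mp huv with h | h
      · exact lt_of_lt_of_le (Complex.normSq_pos.2 h)
          (le_add_of_nonneg_right (Complex.normSq_nonneg v))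
      · exact lt_of_lt_of_le (Complex.normSq_pos.2 h)
          (le_add_of_nonneg_left (Complex.normSq_nonneg u))
    set t : ℝ := Real.sqrt N with htdef
    have ht : 0 < t := Real.sqrt_pos.2 hN
    have htc : (t:ℂ) ≠ 0 := by exact_mod_cast ht.ne'
    have htt : (t:ℂ) * (t:ℂ) = (N:ℂ) := by
      rw [← Complex.ofReal_mul, Real.mul_self_sqrt hN.le]
    refine ⟨u / (t:ℂ), v / (t:ℂ), ?_, ?_, ?_⟩
    · have key : (starRingEnd ℂ) u * u + (starRingEnd ℂ) v * v = (N:ℂ) := by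
        rw [mul_comm ((starRingEnd ℂ) u) u, mul_comm ((starRingEnd ℂ) v) v,
          Complex.mul_conj, Complex.mul_conj]
        push_cast [hNdef]
        ring
      have hstep : (starRingEnd ℂ) (u / (t:ℂ)) * (u / (t:ℂ))
          + (starRingEnd ℂ) (v / (t:ℂ)) * (v / (t:ℂ))
          = ((starRingEnd ℂ) u * u + (starRingEnd ℂ) v * v) / ((t:ℂ) * (t:ℂ)) := by
        simp [map_div₀, Complex.conj_ofReal]
        ring
      rw [hstep, key, htt, div_self (by exact_mod_cast hN.ne')]
    · field_simp
      linear_combination hk1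
    · field_simp
      linear_combination hk2
  obtain ⟨hBdet, hBU⟩ := mkUnitary x y hxy
  set B : Matrix (Fin 2) (Fin 2) ℂ := !![x, -(starRingEnd ℂ) y; y, (starRingEnd ℂ) x] with hBdef
  set M : Matrix (Fin 2) (Fin 2) ℂ := G 0 * B with hMdef
  have hM00 : M 0 0 = 0 := by
    simp [hMdef, hBdef, Matrix.mul_apply, Fin.sum_univ_two]
    linear_combination hcol0
  have hM10 : M 1 0 = 0 := by
    simp [hMdef, hBdef, Matrix.mul_apply, Fin.sum_univ_two]
    linear_combination hcol1
  have hMne : M ≠ 0 := by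
    intro hM
    apply hG0
    have hBB : B * star B = 1 := Matrix.mem_unitaryGroup_iff.mp hBU
    have hGB : G 0 = M * star B := by rw [hMdef, Matrix.mul_assoc, hBB, Matrix.mul_one]
    rw [hGB, hM, Matrix.zero_mul]
  obtain ⟨A, hAdet, hAM⟩ := reduce_col M hM00 hM10 hMne
  have hAGB : A * G 0 * B = !![0,0;0,1] := by rw [Matrix.mul_assoc]; exact hAM
  refine ⟨A, B, hAdet, hBdet, hBU, ?_⟩
  -- define the entry functions
  set a : ℂ → ℂ := fun z => (A * G z * B) 0 0 with hadef
  set b : ℂ → ℂ := fun z => (A * G z * B) 0 1 with hbdef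
  set c : ℂ → ℂ := fun z => (A * G z * B) 1 0 with hcdef
  set d : ℂ → ℂ := fun z => (A * G z * B) 1 1 with hddef
  have hda : DifferentiableOn ℂ a Disc := diffOn_sandwich A B G Disc hG_holo 0 0
  have hdb : DifferentiableOn ℂ b Disc := diffOn_sandwich A B G Disc hG_holo 0 1
  have hdc : DifferentiableOn ℂ c Disc := diffOn_sandwich A B G Disc hG_holo 1 0
  have hdd : DifferentiableOn ℂ d Disc := diffOn_sandwich A B G Disc hG_holo 1 1
  have ha0 : a 0 = 0 := by rw [hadef]; simp only; rw [hAGB]; simp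
  have hb0 : b 0 = 0 := by rw [hbdef]; simp only; rw [hAGB]; simp
  have hc0 : c 0 = 0 := by rw [hcdef]; simp only; rw [hAGB]; simp
  have hd0 : d 0 = 1 := by rw [hddef]; simp only; rw [hAGB]; simp
  have hmain : ∀ z ∈ PDisc, A * F z * B = (z ^ n)⁻¹ • !![a z, b z; c z, d z] := by
    intro z hz
    have hzne : z ≠ 0 := by
      have hzz : z ∈ Metric.ball (0:ℂ) 1 \ {0} := hz
      simpa using hzz.2
    have hzn : (z^n) ≠ 0 := pow_ne_zero _ hzne
    have hFz : F z = (z^n)⁻¹ • G z := by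
      rw [hG_eq z hz, smul_smul, inv_mul_cancel₀ hzn, one_smul]
    rw [hFz, Matrix.mul_smul, Matrix.smul_mul]
    congr 1
    exact Matrix.eta_fin_two (A * G z * B)
  -- derivative of a at 0
  set φ : ℂ → ℂ := fun z => a z * d z - b z * c z with hφdef
  have hφPD : ∀ z ∈ PDisc, φ z = z^(2*n) := by
    intro z hz
    have h1 : φ z = (A * G z * B).det := (Matrix.det_fin_two _).symm
    rw [h1, Matrix.det_mul, Matrix.det_mul, hAdet, hBdet, one_mul, mul_one, hdetGeq z hz]
  have hφ0 : φ 0 = 0 := by simp [hφdef, ha0, hb0, hc0, hd0]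
  have hmem : Disc ∈ nhds (0:ℂ) := hDisc_open.mem_nhds h0Disc
  have hdaa : DifferentiableAt ℂ a 0 := hda.differentiableAt hmem
  have hdba : DifferentiableAt ℂ b 0 := hdb.differentiableAt hmem
  have hdca : DifferentiableAt ℂ c 0 := hdc.differentiableAt hmem
  have hdda : DifferentiableAt ℂ d 0 := hdd.differentiableAt hmem
  have hφdiff : DifferentiableAt ℂ φ 0 := (hdaa.mul hdda).sub (hdba.mul hdca)
  have hderivφ : deriv φ 0 = 0 := by
    haveI := hne
    have t1 : Filter.Tendsto (slope φ 0) (nhdsWithin 0 PDisc) (nhds (deriv φ 0)) :=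
      (hasDerivAt_iff_tendsto_slope.mp hφdiff.hasDerivAt).mono_left
        (nhdsWithin_mono 0 hPD_ne)
    have t2 : Filter.Tendsto (slope φ 0) (nhdsWithin 0 PDisc) (nhds 0) := by
      apply Filter.Tendsto.congr' (f₁ := fun z : ℂ => z ^ (2*n - 1))
      · apply eventually_nhdsWithin_of_forall
        intro z hz
        have hzne : z ≠ 0 := by
          have hzz : z ∈ Metric.ball (0:ℂ) 1 \ {0} := hz
          simpa using hzz.2
        rw [slope_def_field, hφPD z hz, hφ0, sub_zero, sub_zero]
        have hsplit : z ^ (2*n) = z^(2*n-1) * z := by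
          rw [← pow_succ]; congr 1; omega
        rw [hsplit, mul_div_assoc, div_self hzne, mul_one]
      · have h3 : Filter.Tendsto (fun z : ℂ => z ^ (2*n-1)) (nhds 0)
            (nhds ((0:ℂ)^(2*n-1))) := (continuous_pow _).tendsto 0
        rw [zero_pow (by omega)] at h3
        exact h3.mono_left nhdsWithin_le_nhds
    exact tendsto_nhds_unique t1 t2
  have hderiva : deriv a 0 = 0 := by
    have hexp : deriv φ 0 = deriv a 0 * d 0 + a 0 * deriv d 0
        - (deriv b 0 * c 0 + b 0 * deriv c 0) := by
      rw [hφdef]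
      rw [deriv_fun_sub (hdaa.fun_mul hdda) (hdba.fun_mul hdca), deriv_fun_mul hdaa hdda,
        deriv_fun_mul hdba hdca]
    rw [hderivφ, ha0, hb0, hc0, hd0] at hexp
    simpa using hexp.symm
  exact ⟨a, b, c, d, hda, hdb, hdc, hdd, hmain, ha0, hderiva, hb0, hc0,
    by rw [hd0]; exact one_ne_zero⟩
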